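/- Let ν, c > 0. For complex s with Re s > -c²/ν, write s = |s|e^{iθ} with θ ∈ [-2π/3, 2π/3] for |s| large, and set λ = s/√(νs + c²) (branch with √(νs+c²) > 0 for real s > -c²/ν). Then as |s| → ∞ with Re s > -c²/ν, Re λ ≥ √|s|/(2√ν) + O(1/√|s|); in particular there exist R, K > 0 such that Re λ ≥ √|s|/(2√ν) - K/√|s| for all such s with |s| ≥ R. -/

import Mathlib

lemma aux_sqrt2 (c W x y v : ℝ) (hx0 : 0 < x) (hy0 : 0 < y) (hv0 : 0 ≤ v)
    (hv2 : v^2 = W) (hW2 : x^2*y^2 - c^2 ≤ W) (hc2 : 4*c^2 ≤ x^2*y^2) :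
    x*y/2 ≤ v * (Real.sqrt 2 / 2) := by
  have key : x*y ≤ Real.sqrt 2 * v := by
    have h := Real.sqrt_le_sqrt (show (x*y)^2 ≤ 2 * v^2 by nlinarith)
    rwa [Real.sqrt_sq (by positivity), Real.sqrt_mul (by norm_num), Real.sqrt_sq hv0] at h
  linarith [mul_pos hx0 hy0]

lemma aux_final (c ν W x y r : ℝ) (hc : 0 < c) (hx0 : 0 < x) (hy0 : 0 < y)
    (hy2 : y^2 = ν) (hW0 : 0 < W)
    (hW2 : x^2*y^2 - c^2 ≤ W) (hc2 : 4*c^2 ≤ x^2*y^2) (hRu : x*y/2 ≤ r) :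
    x/(2*y) - c^2/(ν*y)/x ≤ 1/ν * r - c^2/ν * (r/W) := by
  have hν : 0 < ν := by rw [← hy2]; positivity
  have hWc : 0 < W - c^2 := by nlinarith
  have key : 1/ν*r - c^2/ν*(r/W) = r*(W-c^2)/(y^2*W) := by
    rw [← hy2]; field_simp
  have key2 : x/(2*y) - c^2/(ν*y)/x = (x^2*y^2 - 2*c^2)/(2*y^3*x) := by
    rw [← hy2]; field_simp
  rw [key, key2, div_le_div_iff₀ (by positivity) (by positivity)]
  have hA1' : 0 ≤ 2*y^3*x * (r - x*y/2) * (W - c^2) :=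
    mul_nonneg (mul_nonneg (by positivity) (by linarith)) hWc.le
  have hA2' : 0 ≤ y^2*c^2*(2*W - x^2*y^2) := by
    have h : x^2*y^2 ≤ 2*W := by nlinarith
    have := sub_nonneg.mpr h
    positivity
  nlinarith [hA1', hA2']

theorem stmt6 (ν c : ℝ) (hν : 0 < ν) (hc : 0 < c) :
    ∃ R K : ℝ, 0 < R ∧ 0 < K ∧
      ∀ s : ℂ, s.re > -c^2/ν → R ≤ ‖s‖ →
        (s / ((ν * s + (c:ℂ)^2) ^ ((1:ℂ)/2))).re ≥
          Real.sqrt (‖s‖) / (2 * Real.sqrt ν)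
            - K / Real.sqrt (‖s‖) := by
  have hsν : 0 < Real.sqrt ν := Real.sqrt_pos.mpr hν
  refine ⟨4*c^2/ν + 1, c^2/(ν*Real.sqrt ν), ?_, ?_, ?_⟩
  · positivity
  · positivity
  intro s hre hR
  set A := ‖s‖ with hAdef
  have hA1 : (1:ℝ) ≤ A := by
    have h0 : 0 ≤ 4*c^2/ν := by positivity
    linarith
  have hA0 : 0 < A := lt_of_lt_of_le one_pos hA1
  set w : ℂ := (ν:ℂ) * s + (c:ℂ)^2 with hw
  have hwre' : w.re = ν * s.re + c^2 := by
    simp [hw, Complex.add_re, Complex.mul_re, ← Complex.ofReal_pow]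
  have hwre : 0 < w.re := by
    rw [hwre']
    have h : -c^2/ν < s.re := hre
    nlinarith [(div_lt_iff₀ hν).mp h]
  have hw0 : w ≠ 0 := fun h => by simp [h] at hwre
  set u := w ^ ((1:ℂ)/2) with hu
  have hu2 : u * u = w := by
    rw [hu, ← Complex.cpow_add _ _ hw0]
    norm_num
  have hu0 : u ≠ 0 := by
    intro h
    rw [h, mul_zero] at hu2
    exact hw0 hu2.symm
  set W := ‖w‖ with hWdef
  have hW0 : 0 < W := norm_pos_iff.mpr hw0
  have habsu : ‖u‖^2 = W := by rw [sq, ← norm_mul, hu2]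
  have hns : Complex.normSq u = W := by rw [← Complex.sq_norm, habsu]
  -- real part of u
  have hure : u.re = Real.sqrt W * Real.cos (Complex.arg w / 2) := by
    rw [hu, Complex.cpow_def_of_ne_zero hw0, Complex.exp_re]
    have h1 : (Complex.log w * (1/2)).re = Real.log W / 2 := by
      simp [Complex.mul_re, Complex.log_re]
      ring
    have h2 : (Complex.log w * (1/2)).im = Complex.arg w / 2 := by
      simp [Complex.mul_im, Complex.log_im]
      ring
    rw [h1, h2]
    congr 1
    rw [Real.sqrt_eq_rpow, Real.rpow_def_of_pos hW0]
    ring_nf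
  have harg : |Complex.arg w| < Real.pi / 2 :=
    Complex.abs_arg_lt_pi_div_two_iff.mpr (Or.inl hwre)
  have hcos : Real.sqrt 2 / 2 ≤ Real.cos (Complex.arg w / 2) := by
    have habs : |Complex.arg w / 2| ≤ Real.pi / 4 := by
      rw [abs_div, abs_of_pos (by norm_num : (0:ℝ) < 2)]
      linarith [harg.le]
    calc Real.sqrt 2 / 2 = Real.cos (Real.pi/4) := Real.cos_pi_div_four.symm
      _ ≤ Real.cos |Complex.arg w / 2| :=
          Real.cos_le_cos_of_nonneg_of_le_pi (abs_nonneg _)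
            (by linarith [Real.pi_pos]) habs
      _ = Real.cos (Complex.arg w / 2) := Real.cos_abs _
  have hReu : Real.sqrt W * (Real.sqrt 2 / 2) ≤ u.re := by
    rw [hure]
    exact mul_le_mul_of_nonneg_left hcos (Real.sqrt_nonneg _)
  -- formula for s / u
  have hν0 : (ν:ℂ) ≠ 0 := by exact_mod_cast hν.ne'
  have hs : (ν:ℂ) * s = u*u - (c:ℂ)^2 := by rw [hu2, hw]; ring
  have hform : s / u = (((1/ν : ℝ)):ℂ) * u - (((c^2/ν : ℝ)):ℂ) * u⁻¹ := by
    have h1 : s / u = ((ν:ℂ)*s) / ((ν:ℂ)*u) := (mul_div_mul_left s u hν0).symm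
    rw [h1, hs]
    push_cast
    field_simp
  have hre_formula : (s/u).re = (1/ν) * u.re - (c^2/ν) * (u.re / W) := by
    rw [hform, Complex.sub_re, Complex.re_ofReal_mul, Complex.re_ofReal_mul,
      Complex.inv_re, hns]
  -- numeric estimates
  have hW1 : ν * A - c^2 ≤ W := by
    have h := norm_sub_norm_le ((ν:ℂ)*s) (-(c:ℂ)^2)
    simp only [sub_neg_eq_add, norm_neg] at h
    calc ν * A - c^2 = ‖(ν:ℂ)*s‖ - ‖(c:ℂ)^2‖ := by
          simp [norm_mul, norm_pow, Complex.norm_real, Real.norm_eq_abs,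
            abs_of_pos hν, abs_of_pos hc, hAdef]
      _ ≤ ‖(ν:ℂ)*s + (c:ℂ)^2‖ := h
      _ = W := rfl
  have hνA : 4*c^2 + ν ≤ ν * A := by
    have h4 : 4*c^2 ≤ (A - 1)*ν := (div_le_iff₀ hν).mp (by linarith)
    nlinarith [h4]
  set x := Real.sqrt A with hxdef
  set y := Real.sqrt ν with hydef
  have hx2 : x^2 = A := Real.sq_sqrt hA0.le
  have hy2 : y^2 = ν := Real.sq_sqrt hν.le
  have hx0 : 0 < x := Real.sqrt_pos.mpr hA0
  have hy0 : 0 < y := hsν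
  have hW2 : x^2 * y^2 - c^2 ≤ W := by rw [hx2, hy2]; linarith
  have hc2 : 4*c^2 ≤ x^2*y^2 := by rw [hx2, hy2]; nlinarith
  have hRu : x*y/2 ≤ u.re :=
    le_trans (aux_sqrt2 c W x y (Real.sqrt W) hx0 hy0 (Real.sqrt_nonneg _)
      (Real.sq_sqrt hW0.le) hW2 hc2) hReu
  rw [ge_iff_le, hre_formula]
  exact aux_final c ν W x y u.re hc hx0 hy0 hy2 hW0 hW2 hc2 hRu
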